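/- Let A and B each consist of M qubits, let E ≥ 0, and let ρ ∈ SEP^{(E)}(A;B) be any density matrix in the convex hull of pure states with S_{1/2} entanglement at most E. Then Tr(ρ · |φ₊⟩⟨φ₊|^{⊗M}) ≤ 2^{−M+E}, where the i-th Bell pair |φ₊⟩ = (|00⟩+|11⟩)/√2 joins the i-th qubit of A with the i-th qubit of B. -/

import Mathlib

open scoped Matrix ComplexOrder ENNReal Classical

noncomputable section

abbrev QVec (n : ℕ) := (Fin n → Fin 2) → ℂ
abbrev QMat (n : ℕ) := Matrix (Fin n → Fin 2) (Fin n → Fin 2) ℂ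

/-- `ψ` is a unit vector (a pure state). -/
def IsUnitVec {n : ℕ} (ψ : QVec n) : Prop := ∑ x, Complex.normSq (ψ x) = 1

/-- The ℓ² norm of a vector. -/
def vnorm {n : ℕ} (v : QVec n) : ℝ := Real.sqrt (∑ x, Complex.normSq (v x))

/-- The density matrix `|ψ⟩⟨ψ|`. -/
def dm {n : ℕ} (ψ : QVec n) : QMat n := Matrix.vecMulVec ψ (star ψ)

/-- The four single-qubit Pauli matrices I, X, Y, Z. -/
def pauli1 : Fin 4 → Matrix (Fin 2) (Fin 2) ℂ :=
  ![1, !![0, 1; 1, 0], !![0, -Complex.I; Complex.I, 0], !![1, 0; 0, -1]]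

/-- The `n`-qubit Pauli operator `P₁ ⊗ ⋯ ⊗ P_n` given by a string `p`. -/
def pauliOp {n : ℕ} (p : Fin n → Fin 4) : QMat n :=
  fun x y => ∏ j, pauli1 (p j) (x j) (y j)

/-- The `n`-qubit Pauli group: matrices `i^a · P₁ ⊗ ⋯ ⊗ P_n`. -/
def PauliGroup (n : ℕ) : Set (QMat n) :=
  {M | ∃ (a : Fin 4) (p : Fin n → Fin 4), M = Complex.I ^ (a : ℕ) • pauliOp p}

/-- A Hermitian Pauli operator: `± P₁ ⊗ ⋯ ⊗ P_n`. -/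
def IsHermPauli {n : ℕ} (M : QMat n) : Prop :=
  ∃ (s : ℂ) (p : Fin n → Fin 4), (s = 1 ∨ s = -1) ∧ M = s • pauliOp p

/-- The stabilizer group `G = {P ∈ 𝒫_n : P|ψ⟩ = |ψ⟩}` of a pure state. -/
def stabGroup {n : ℕ} (ψ : QVec n) : Set (QMat n) :=
  {P | P ∈ PauliGroup n ∧ P.mulVec ψ = ψ}

/-- `M` is supported on the qubits in `A` (acts as the identity on the rest),
i.e. `M = f_A ⊗ 𝟙` for some matrix `f` on the `A` qubits. -/
def MatSupportedOn {n : ℕ} (A : Finset (Fin n)) (M : QMat n) : Prop :=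
  ∃ f : ({j // j ∈ A} → Fin 2) → ({j // j ∈ A} → Fin 2) → ℂ,
    ∀ x y, M x y =
      if ∀ j ∉ A, x j = y j then f (fun j => x j.1) (fun j => y j.1) else 0

/-- The local stabilizer subgroup `G_A`: stabilizers acting as the identity outside `A`. -/
def localStab {n : ℕ} (ψ : QVec n) (A : Finset (Fin n)) : Set (QMat n) :=
  {P | P ∈ stabGroup ψ ∧ MatSupportedOn A P}

/-- `log₂` of the cardinality of a set. -/
def logCard {α : Type*} (S : Set α) : ℝ := Real.logb 2 S.ncard

/-- The stabilizer entanglement `ℰ(ψ; A|B) = (|S| − |S_A| − |S_B|)/2` (with `B = Aᶜ`). -/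
def stabEnt {n : ℕ} (ψ : QVec n) (A : Finset (Fin n)) : ℝ :=
  (logCard (stabGroup ψ) - logCard (localStab ψ A) - logCard (localStab ψ Aᶜ)) / 2

/-- Combine an assignment on `A` and on `Aᶜ` into one on all qubits. -/
def mergeFn {n : ℕ} (A : Finset (Fin n)) (x : {j // j ∈ A} → Fin 2)
    (z : {j // j ∈ Aᶜ} → Fin 2) : Fin n → Fin 2 :=
  fun j => if h : j ∈ A then x ⟨j, h⟩ else z ⟨j, Finset.mem_compl.mpr h⟩

/-- The reduced density matrix `ψ_A = Tr_{Aᶜ} |ψ⟩⟨ψ|`. -/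
def reducedDM {n : ℕ} (A : Finset (Fin n)) (ψ : QVec n) :
    Matrix ({j // j ∈ A} → Fin 2) ({j // j ∈ A} → Fin 2) ℂ :=
  fun x y => ∑ z : {j // j ∈ Aᶜ} → Fin 2, ψ (mergeFn A x z) * star (ψ (mergeFn A y z))

/-- The α-Rényi entropy (base 2) of a Hermitian matrix, defined through its eigenvalues:
`S₀ = log₂ rank`, `S₁` the von Neumann entropy, `S_∞ = −log₂` (largest eigenvalue, which is
the operator norm for positive semidefinite matrices), and
`S_α = (1−α)⁻¹ log₂ Σ λ_i^α` otherwise. -/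
def renyi {m : Type*} [Fintype m] [DecidableEq m] (α : ℝ≥0∞)
    (ρ : Matrix m m ℂ) : ℝ :=
  if h : ρ.IsHermitian then
    if α = 0 then Real.logb 2 (ρ.rank : ℝ)
    else if α = 1 then -∑ i, h.eigenvalues i * Real.logb 2 (h.eigenvalues i)
    else if α = ⊤ then -Real.logb 2 (⨆ i, h.eigenvalues i)
    else (1 / (1 - α.toReal)) * Real.logb 2 (∑ i, h.eigenvalues i ^ α.toReal)
  else 0

def IsUnitary {n : ℕ} (U : QMat n) : Prop := U * Uᴴ = 1 ∧ Uᴴ * U = 1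

/-- A Clifford unitary: a unitary whose conjugation action maps the Pauli group onto itself. -/
def IsClifford {n : ℕ} (U : QMat n) : Prop :=
  IsUnitary U ∧ (fun P => U * P * Uᴴ) '' PauliGroup n = PauliGroup n

/-- Amplitudes of the Bell pair `|φ₊⟩ = (|00⟩+|11⟩)/√2`. -/
def bellAmp (a b : Fin 2) : ℂ := if a = b then ((Real.sqrt 2 : ℝ) : ℂ)⁻¹ else 0

/-- Trace out the last `m` qubits of a pure state on `n + m` qubits. -/
def traceOutLast {n m : ℕ} (Ψ : QVec (n + m)) : QMat n :=
  fun x y => ∑ z : Fin m → Fin 2,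
    Ψ (Fin.append x z) * star (Ψ (Fin.append y z))

/-- `Tr √ρ` for a positive semidefinite matrix (junk value `0` otherwise). -/
def sqrtTrace {m : Type*} [Fintype m] [DecidableEq m] (ρ : Matrix m m ℂ) : ℝ :=
  if h : ρ.PosSemidef then
    (h.1.eigenvectorUnitary.1 * Matrix.diagonal (((↑) : ℝ → ℂ) ∘ (Real.sqrt ·) ∘ h.1.eigenvalues) *
      (star h.1.eigenvectorUnitary : Matrix m m ℂ)).trace.re else 0

/-- `S_{1/2}(ψ_A) = 2 log₂ Tr √ψ_A`. -/
def sHalf {n : ℕ} (A : Finset (Fin n)) (ψ : QVec n) : ℝ :=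
  2 * Real.logb 2 (sqrtTrace (reducedDM A ψ))

/-- The set `SEP^{(E)}(A;B)`: convex hull of pure states with `S_{1/2}` entanglement ≤ E. -/
def SEPE {n : ℕ} (A : Finset (Fin n)) (E : ℝ) : Set (QMat n) :=
  convexHull ℝ {ρ | ∃ ψ : QVec n, IsUnitVec ψ ∧ sHalf A ψ ≤ E ∧ ρ = dm ψ}

/-- `ψ` is a product state across the bipartition `A | Aᶜ`. -/
def IsProdAcross {n : ℕ} (A : Finset (Fin n)) (ψ : QVec n) : Prop :=
  ∃ (f : ({j // j ∈ A} → Fin 2) → ℂ) (g : ({j // j ∈ Aᶜ} → Fin 2) → ℂ),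
    ∀ x, ψ x = f (fun j => x j.1) * g (fun j => x j.1)

/-- The separable states across `A | Aᶜ`. -/
def SEPset {n : ℕ} (A : Finset (Fin n)) : Set (QMat n) :=
  convexHull ℝ {ρ | ∃ ψ : QVec n, IsUnitVec ψ ∧ IsProdAcross A ψ ∧ ρ = dm ψ}

/-- The trace norm `‖X‖₁ = Tr √(XᴴX)` (sum of singular values). -/
def traceNorm {m : Type*} [Fintype m] [DecidableEq m] (X : Matrix m m ℂ) : ℝ :=
  sqrtTrace (Xᴴ * X)

end

noncomputable section

/-- The `M`-fold Bell state `|φ₊⟩^{⊗M}` on `M + M` qubits, where the `i`-th Bell pair joins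
the `i`-th qubit of the first half with the `i`-th qubit of the second half. -/
def bellM (M : ℕ) : QVec (M + M) :=
  fun x => ∏ i : Fin M, bellAmp (x (Fin.castAdd M i)) (x (Fin.natAdd M i))


-- ===== auxiliary material =====

open Matrix in
lemma sqrtTrace_eq_sum_sqrt {m : Type*} [Fintype m] [DecidableEq m] {X : Matrix m m ℂ}
    (hP : X.PosSemidef) : sqrtTrace X = ∑ i, Real.sqrt (hP.1.eigenvalues i) := by
  rw [sqrtTrace, dif_pos hP]
  have h1 : (hP.1.eigenvectorUnitary.1 * Matrix.diagonal (((↑) : ℝ → ℂ) ∘ (Real.sqrt ·) ∘ hP.1.eigenvalues) *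
      (star hP.1.eigenvectorUnitary : Matrix m m ℂ)).trace = ∑ i, (Real.sqrt (hP.1.eigenvalues i) : ℂ) := by
    rw [Matrix.trace_mul_cycle]
    rw [Unitary.coe_star_mul_self, Matrix.one_mul, Matrix.trace_diagonal]
    rfl
  rw [h1, Complex.re_sum]
  simp

lemma sqrtTrace_nonneg {m : Type*} [Fintype m] [DecidableEq m] (X : Matrix m m ℂ) :
    0 ≤ sqrtTrace X := by
  by_cases hX : X.PosSemidef
  · rw [sqrtTrace_eq_sum_sqrt hX]
    exact Finset.sum_nonneg fun i _ => Real.sqrt_nonneg _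
  · rw [sqrtTrace, dif_neg hX]

open Matrix in
lemma abs_trace_le {m : Type*} [Fintype m] [DecidableEq m] (Ψ : Matrix m m ℂ) :
    ‖Ψ.trace‖ ≤ sqrtTrace (Ψ * Ψᴴ) := by
  have hP : (Ψ * Ψᴴ).PosSemidef := Matrix.posSemidef_self_mul_conjTranspose Ψ
  rw [sqrtTrace_eq_sum_sqrt hP]
  have htr : Ψ.trace = ((star (hP.1.eigenvectorUnitary : Matrix m m ℂ)) * Ψ *
      (hP.1.eigenvectorUnitary : Matrix m m ℂ)).trace := by
    rw [Matrix.trace_mul_cycle,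
      show (hP.1.eigenvectorUnitary : Matrix m m ℂ) * star (hP.1.eigenvectorUnitary : Matrix m m ℂ) = 1 from
        (Matrix.mem_unitaryGroup_iff).mp hP.1.eigenvectorUnitary.2, Matrix.one_mul]
  have hdiag : ∀ i, ((star (hP.1.eigenvectorUnitary : Matrix m m ℂ)) * Ψ *
      (hP.1.eigenvectorUnitary : Matrix m m ℂ)) i i
      = star ⇑(hP.1.eigenvectorBasis i) ⬝ᵥ Ψ *ᵥ ⇑(hP.1.eigenvectorBasis i) := by
    intro i
    simp only [Matrix.mul_apply, Matrix.mulVec, dotProduct, Matrix.star_apply,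
      Pi.star_apply, Finset.sum_mul, Finset.mul_sum,
      Matrix.IsHermitian.eigenvectorUnitary_apply]
    rw [Finset.sum_comm]
    refine Finset.sum_congr rfl fun x _ => Finset.sum_congr rfl fun y _ => ?_
    ring
  have hbound : ∀ i, ‖(star ⇑(hP.1.eigenvectorBasis i) ⬝ᵥ Ψ *ᵥ ⇑(hP.1.eigenvectorBasis i))‖
      ≤ Real.sqrt (hP.1.eigenvalues i) := by
    intro i
    set u : EuclideanSpace ℂ m := hP.1.eigenvectorBasis i with hu
    set w : EuclideanSpace ℂ m := (WithLp.equiv 2 (m → ℂ)).symm (Ψᴴ *ᵥ ⇑u) with hw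
    have h1 : star ⇑u ⬝ᵥ Ψ *ᵥ ⇑u = inner ℂ w u := by
      rw [EuclideanSpace.inner_eq_star_dotProduct]
      have : w.ofLp = Ψᴴ *ᵥ ⇑u := rfl
      rw [this]
      rw [Matrix.star_mulVec, Matrix.conjTranspose_conjTranspose, Matrix.dotProduct_mulVec,
        dotProduct_comm]
    have h2 : ‖w‖ ^ 2 = hP.1.eigenvalues i := by
      have hmv : (Ψ * Ψᴴ) *ᵥ ⇑u = hP.1.eigenvalues i • ⇑u := hP.1.mulVec_eigenvectorBasis i
      have hin : (inner ℂ w w : ℂ) = (hP.1.eigenvalues i : ℂ) := by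
        rw [EuclideanSpace.inner_eq_star_dotProduct]
        have hww : w.ofLp = Ψᴴ *ᵥ ⇑u := rfl
        rw [hww]
        rw [Matrix.star_mulVec, Matrix.conjTranspose_conjTranspose, dotProduct_comm,
          ← Matrix.dotProduct_mulVec,
          Matrix.mulVec_mulVec, hmv]
        have huu : star ⇑u ⬝ᵥ ⇑u = (1 : ℂ) := by
          have := hP.1.eigenvectorBasis.orthonormal.1 i
          have h3 : (inner ℂ u u : ℂ) = 1 := by
            rw [@inner_self_eq_norm_sq_to_K]
            rw [this]; norm_num
          rw [EuclideanSpace.inner_eq_star_dotProduct] at h3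
          rw [dotProduct_comm]; exact h3
        rw [dotProduct_smul, huu]
        simp [Complex.real_smul]
      have := @inner_self_eq_norm_sq ℂ _ _ _ _ w
      rw [← this, hin]
      simp
    calc ‖(star ⇑u ⬝ᵥ Ψ *ᵥ ⇑u)‖ = ‖(inner ℂ w u : ℂ)‖ := by rw [h1]
      _ ≤ ‖w‖ * ‖u‖ := norm_inner_le_norm w u
      _ = ‖w‖ := by rw [hP.1.eigenvectorBasis.orthonormal.1 i, mul_one]
      _ = Real.sqrt (hP.1.eigenvalues i) := by
          rw [← h2]; rw [Real.sqrt_sq (norm_nonneg w)]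
  calc ‖Ψ.trace‖ = ‖∑ i, ((star (hP.1.eigenvectorUnitary : Matrix m m ℂ)) * Ψ *
        (hP.1.eigenvectorUnitary : Matrix m m ℂ)) i i‖ := by rw [htr]; rfl
    _ ≤ ∑ i, ‖((star (hP.1.eigenvectorUnitary : Matrix m m ℂ)) * Ψ *
        (hP.1.eigenvectorUnitary : Matrix m m ℂ)) i i‖ := norm_sum_le _ _
    _ ≤ ∑ i, Real.sqrt (hP.1.eigenvalues i) := by
        refine Finset.sum_le_sum fun i _ => ?_
        rw [hdiag i]; exact hbound i


open Matrix in
lemma trace_submatrix_equiv' {m t : Type*} [Fintype m] [Fintype t] (Y : Matrix m m ℂ)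
    (e : t ≃ m) : (Y.submatrix e e).trace = Y.trace := by
  rw [Matrix.trace, Matrix.trace]
  exact Fintype.sum_equiv e _ _ (fun i => rfl)

lemma sum_sqrt_eq_roots {m : Type*} [Fintype m] [DecidableEq m] {X : Matrix m m ℂ}
    (hP : X.PosSemidef) : ∑ i, Real.sqrt (hP.1.eigenvalues i) =
      (Multiset.map (fun z : ℂ => Real.sqrt z.re) X.charpoly.roots).sum := by
  rw [hP.1.roots_charpoly_eq_eigenvalues, Multiset.map_map]
  rfl

open Matrix in
lemma sqrtTrace_submatrix {m t : Type*} [Fintype m] [DecidableEq m] [Fintype t] [DecidableEq t]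
    (X : Matrix m m ℂ) (e : t ≃ m) : sqrtTrace (X.submatrix e e) = sqrtTrace X := by
  by_cases hX : X.PosSemidef
  · have hS : (X.submatrix e e).PosSemidef := hX.submatrix e
    rw [sqrtTrace_eq_sum_sqrt hX, sqrtTrace_eq_sum_sqrt hS, sum_sqrt_eq_roots hX, sum_sqrt_eq_roots hS]
    have : X.submatrix e e = Matrix.reindex e.symm e.symm X := rfl
    rw [this, Matrix.charpoly_reindex]
  · have hS : ¬ (X.submatrix e e).PosSemidef := by
      intro h
      have h2 := h.submatrix e.symm
      rw [Matrix.submatrix_submatrix] at h2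
      have he : (⇑e ∘ ⇑e.symm) = id := by funext j; simp
      rw [he, Matrix.submatrix_id_id] at h2
      exact hX h2
    rw [sqrtTrace, sqrtTrace, dif_neg hX, dif_neg hS]


/-- The `A`-side qubits. -/
def Aset (M : ℕ) : Finset (Fin (M + M)) :=
  Finset.univ.filter (fun j : Fin (M + M) => (j : ℕ) < M)

def eA (M : ℕ) : Fin M ≃ {j : Fin (M + M) // j ∈ Aset M} where
  toFun i := ⟨Fin.castAdd M i, by simp [Aset]⟩
  invFun j := ⟨(j.1 : ℕ), (Finset.mem_filter.mp j.2).2⟩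
  left_inv i := by ext; simp
  right_inv j := by ext; simp

def eB (M : ℕ) : Fin M ≃ {j : Fin (M + M) // j ∈ (Aset M)ᶜ} where
  toFun i := ⟨Fin.natAdd M i, by
    simp [Aset, Finset.mem_compl]⟩
  invFun j := ⟨(j.1 : ℕ) - M, by
    have h1 : ¬ ((j.1 : ℕ) < M) := by
      have := Finset.mem_compl.mp j.2
      simpa [Aset] using this
    have h2 : (j.1 : ℕ) < M + M := j.1.isLt
    omega⟩
  left_inv i := by ext; simp
  right_inv j := by
    ext
    have h1 : ¬ ((j.1 : ℕ) < M) := by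
      have := Finset.mem_compl.mp j.2
      simpa [Aset] using this
    simp
    omega

/-- Restriction equivalence on functions for the A side. -/
def EqA (M : ℕ) : ({j : Fin (M + M) // j ∈ Aset M} → Fin 2) ≃ (Fin M → Fin 2) where
  toFun x := fun i => x (eA M i)
  invFun u := fun j => u ((eA M).symm j)
  left_inv x := by funext j; simp
  right_inv u := by funext i; simp

def EqB (M : ℕ) : ({j : Fin (M + M) // j ∈ (Aset M)ᶜ} → Fin 2) ≃ (Fin M → Fin 2) where
  toFun x := fun i => x (eB M i)
  invFun u := fun j => u ((eB M).symm j)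
  left_inv x := by funext j; simp
  right_inv u := by funext i; simp

lemma mergeFn_eq {M : ℕ} (x : {j : Fin (M + M) // j ∈ Aset M} → Fin 2)
    (z : {j : Fin (M + M) // j ∈ (Aset M)ᶜ} → Fin 2) :
    mergeFn (Aset M) x z = Fin.append (EqA M x) (EqB M z) := by
  funext j
  refine Fin.addCases (fun i => ?_) (fun i => ?_) j
  · rw [Fin.append_left]
    have hj : Fin.castAdd M i ∈ Aset M := (eA M i).2
    rw [mergeFn, dif_pos hj]
    exact congrArg x (Subtype.ext rfl)
  · rw [Fin.append_right]
    have hj : ¬ (Fin.natAdd M i ∈ Aset M) := Finset.mem_compl.mp (eB M i).2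
    rw [mergeFn, dif_neg hj]
    exact congrArg z (Subtype.ext rfl)

/-- The amplitude matrix of `ψ` for the bipartition. -/
def ampMat (M : ℕ) (ψ : QVec (M + M)) : Matrix (Fin M → Fin 2) (Fin M → Fin 2) ℂ :=
  fun u v => ψ (Fin.append u v)

lemma reducedDM_eq {M : ℕ} (ψ : QVec (M + M)) :
    reducedDM (Aset M) ψ =
      ((ampMat M ψ) * (ampMat M ψ)ᴴ).submatrix (EqA M) (EqA M) := by
  funext x y
  rw [reducedDM]
  rw [Matrix.submatrix_apply, Matrix.mul_apply]
  rw [← Equiv.sum_comp (EqB M) (fun v => ampMat M ψ (EqA M x) v * (ampMat M ψ)ᴴ v (EqA M y))]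
  refine Finset.sum_congr rfl fun z _ => ?_
  rw [mergeFn_eq, mergeFn_eq, Matrix.conjTranspose_apply, ampMat, ampMat]

lemma sqrtTrace_reducedDM {M : ℕ} (ψ : QVec (M + M)) :
    sqrtTrace (reducedDM (Aset M) ψ) = sqrtTrace ((ampMat M ψ) * (ampMat M ψ)ᴴ) := by
  rw [reducedDM_eq, sqrtTrace_submatrix]


def appendEquiv (M : ℕ) : ((Fin M → Fin 2) × (Fin M → Fin 2)) ≃ (Fin (M + M) → Fin 2) where
  toFun p := Fin.append p.1 p.2
  invFun x := (fun i => x (Fin.castAdd M i), fun i => x (Fin.natAdd M i))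
  left_inv p := by
    obtain ⟨u, v⟩ := p
    refine Prod.ext ?_ ?_ <;> funext i
    · exact Fin.append_left u v i
    · exact Fin.append_right u v i
  right_inv x := by
    funext j
    refine Fin.addCases (fun i => ?_) (fun i => ?_) j
    · exact Fin.append_left _ _ i
    · exact Fin.append_right _ _ i

lemma bellM_append {M : ℕ} (u v : Fin M → Fin 2) :
    bellM M (Fin.append u v) = if u = v then (((Real.sqrt 2 : ℝ) : ℂ))⁻¹ ^ M else 0 := by
  rw [bellM]
  simp only [Fin.append_left, Fin.append_right]
  by_cases h : u = v
  · subst h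
    rw [if_pos rfl]
    have hb : ∀ i : Fin M, bellAmp (u i) (u i) = (((Real.sqrt 2 : ℝ) : ℂ))⁻¹ :=
      fun i => by rw [bellAmp, if_pos rfl]
    rw [Finset.prod_congr rfl (fun i _ => hb i), Finset.prod_const, Finset.card_univ,
      Fintype.card_fin]
  · rw [if_neg h]
    obtain ⟨i, hi⟩ := Function.ne_iff.mp h
    refine Finset.prod_eq_zero (Finset.mem_univ i) ?_
    rw [bellAmp, if_neg hi]

lemma trace_dm_mul_dm {n : ℕ} (ψ φ : QVec n) :
    Matrix.trace (dm ψ * dm φ)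
      = ((∑ x, ψ x * star (φ x)) * star (∑ x, ψ x * star (φ x))) := by
  rw [star_sum]
  simp only [star_mul', star_star]
  rw [Finset.sum_mul_sum]
  rw [Matrix.trace]
  simp only [Matrix.diag_apply, Matrix.mul_apply, dm, Matrix.vecMulVec_apply, Pi.star_apply]
  refine Finset.sum_congr rfl fun x _ => Finset.sum_congr rfl fun z _ => ?_
  ring

lemma trace_dm_bell {M : ℕ} (ψ : QVec (M + M)) :
    (Matrix.trace (dm ψ * dm (bellM M))).re
      = Complex.normSq ((ampMat M ψ).trace) * (2⁻¹ : ℝ) ^ M := by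
  rw [trace_dm_mul_dm]
  set c : ℂ := (((Real.sqrt 2 : ℝ) : ℂ))⁻¹ with hc
  have h1 : (∑ x, ψ x * star (bellM M x)) = (ampMat M ψ).trace * star (c ^ M) := by
    rw [← Equiv.sum_comp (appendEquiv M) (fun x => ψ x * star (bellM M x))]
    rw [Fintype.sum_prod_type]
    have h2 : ∀ u v : Fin M → Fin 2,
        ψ ((appendEquiv M) (u, v)) * star (bellM M ((appendEquiv M) (u, v)))
          = if u = v then ψ (Fin.append u v) * star (c ^ M) else 0 := by
      intro u v
      have : (appendEquiv M) (u, v) = Fin.append u v := rfl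
      rw [this, bellM_append]
      by_cases h : u = v
      · rw [if_pos h, if_pos h]
      · rw [if_neg h, if_neg h, star_zero, mul_zero]
    rw [Finset.sum_congr rfl fun u _ => Finset.sum_congr rfl fun v _ => h2 u v]
    rw [Matrix.trace, Finset.sum_mul]
    refine Finset.sum_congr rfl fun u _ => ?_
    rw [Finset.sum_ite_eq, if_pos (Finset.mem_univ u)]
    rfl
  rw [h1]
  have h3 : ((ampMat M ψ).trace * star (c ^ M)) * star ((ampMat M ψ).trace * star (c ^ M))
      = ((Complex.normSq ((ampMat M ψ).trace) * Complex.normSq (c ^ M) : ℝ) : ℂ) := by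
    rw [star_mul', star_star]
    have : (ampMat M ψ).trace * star (c ^ M) * (star (ampMat M ψ).trace * c ^ M)
        = ((ampMat M ψ).trace * star ((ampMat M ψ).trace)) * (c ^ M * star (c ^ M)) := by ring
    rw [this]
    rw [Complex.star_def, Complex.mul_conj, Complex.mul_conj]
    rw [← Complex.ofReal_mul]
  rw [h3, Complex.ofReal_re]
  congr 1
  rw [map_pow]
  congr 1
  rw [hc, map_inv₀, Complex.normSq_ofReal, Real.mul_self_sqrt (by norm_num)]

lemma pure_bound {M : ℕ} {E : ℝ} (ψ : QVec (M + M))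
    (hs : sHalf (Aset M) ψ ≤ E) :
    (Matrix.trace (dm ψ * dm (bellM M))).re ≤ (2 : ℝ) ^ (E - (M : ℝ)) := by
  rw [trace_dm_bell]
  set t := sqrtTrace (reducedDM (Aset M) ψ) with ht
  have htnn : 0 ≤ t := sqrtTrace_nonneg _
  have habs : ‖(ampMat M ψ).trace‖ ≤ t := by
    rw [ht, sqrtTrace_reducedDM]
    exact abs_trace_le _
  have ht2 : t ^ 2 ≤ (2 : ℝ) ^ E := by
    rcases eq_or_lt_of_le htnn with h0 | h0
    · rw [← h0]
      simpa using (Real.rpow_nonneg (by norm_num : (0:ℝ) ≤ 2) E)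
    · have hlog : Real.logb 2 t ≤ E / 2 := by
        rw [sHalf] at hs; linarith
      have hle : t ≤ (2 : ℝ) ^ (E / 2) :=
        (Real.logb_le_iff_le_rpow (by norm_num) h0).mp hlog
      calc t ^ 2 ≤ ((2:ℝ) ^ (E/2)) ^ 2 := pow_le_pow_left₀ htnn hle 2
        _ = (2:ℝ) ^ E := by
            rw [← Real.rpow_natCast ((2:ℝ) ^ (E/2)) 2, ← Real.rpow_mul (by norm_num)]
            norm_num
  have hn : Complex.normSq ((ampMat M ψ).trace) ≤ (2:ℝ) ^ E := by
    rw [Complex.normSq_eq_norm_sq]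
    calc ‖(ampMat M ψ).trace‖ ^ 2 ≤ t ^ 2 :=
          pow_le_pow_left₀ (norm_nonneg _) habs 2
      _ ≤ _ := ht2
  calc Complex.normSq ((ampMat M ψ).trace) * (2⁻¹:ℝ) ^ M
      ≤ (2:ℝ) ^ E * (2⁻¹:ℝ) ^ M := mul_le_mul_of_nonneg_right hn (by positivity)
    _ = (2:ℝ) ^ (E - (M:ℝ)) := by
        rw [Real.rpow_sub (by norm_num), Real.rpow_natCast, div_eq_mul_inv, inv_pow]

/-- for any `ρ ∈ SEP^{(E)}(A;B)` with `A`, `B` each of `M` qubits,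
`Tr(ρ |φ₊⟩⟨φ₊|^{⊗M}) ≤ 2^{−M+E}`. -/
theorem statement11 (M : ℕ) (E : ℝ) (hE : 0 ≤ E)
    (ρ : QMat (M + M))
    (hρ : ρ ∈ SEPE (Finset.univ.filter (fun j : Fin (M + M) => (j : ℕ) < M)) E) :
    (Matrix.trace (ρ * dm (bellM M))).re ≤ (2 : ℝ) ^ (E - (M : ℝ)) := by
  have hA : (Finset.univ.filter (fun j : Fin (M + M) => (j : ℕ) < M)) = Aset M := rfl
  rw [hA] at hρ
  have hlin : IsLinearMap ℝ (fun σ : QMat (M + M) => (Matrix.trace (σ * dm (bellM M))).re) := by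
    constructor
    · intro a b
      simp [Matrix.add_mul, Matrix.trace_add]
    · intro r a
      simp [Matrix.smul_mul, Matrix.trace_smul, Complex.smul_re]
  have hconv : Convex ℝ {σ : QMat (M + M) |
      (Matrix.trace (σ * dm (bellM M))).re ≤ (2 : ℝ) ^ (E - (M : ℝ))} :=
    convex_halfSpace_le hlin _
  have hgen : {ρ | ∃ ψ : QVec (M + M), IsUnitVec ψ ∧ sHalf (Aset M) ψ ≤ E ∧ ρ = dm ψ} ⊆
      {σ : QMat (M + M) | (Matrix.trace (σ * dm (bellM M))).re ≤ (2 : ℝ) ^ (E - (M : ℝ))} := by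
    rintro σ ⟨ψ, _, hsh, rfl⟩
    exact pure_bound ψ hsh
  exact convexHull_min hgen hconv hρ

end
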